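/- Let G be a graph, let X be a subset of V(G) that is a side of some 2-join of G with split (X, Y, A, B, A', B') but is not a path-side (i.e., G[X] is not a chordless path from A to B with interior in X \ (A ∪ B)). Then there exist two vertices u, v ∈ X such that no single induced path of G contained in X, with one end in A, the other end in B, interior in X \ (A ∪ B), and all interior vertices of degree 2 in G, contains both u and v. -/

import Mathlib

open SimpleGraph Set

/-- `(X1, X2, A1, B1, A2, B2)` is a split of a 2-join of `G`. -/
def IsTwoJoinSplit {V : Type*} (G : SimpleGraph V) (X1 X2 A1 B1 A2 B2 : Set V) : Prop :=
  X1 ∪ X2 = Set.univ ∧ Disjoint X1 X2 ∧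
  A1 ⊆ X1 ∧ B1 ⊆ X1 ∧ A2 ⊆ X2 ∧ B2 ⊆ X2 ∧
  Disjoint A1 B1 ∧ Disjoint A2 B2 ∧
  A1.Nonempty ∧ B1.Nonempty ∧ A2.Nonempty ∧ B2.Nonempty ∧
  (∀ a1 ∈ A1, ∀ a2 ∈ A2, G.Adj a1 a2) ∧
  (∀ b1 ∈ B1, ∀ b2 ∈ B2, G.Adj b1 b2) ∧
  (∀ x ∈ X1, ∀ y ∈ X2, G.Adj x y → (x ∈ A1 ∧ y ∈ A2) ∨ (x ∈ B1 ∧ y ∈ B2)) ∧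
  3 ≤ X1.ncard ∧ 3 ≤ X2.ncard

/-- `(X1, X2)` is a 2-join of `G`. -/
def IsTwoJoin {V : Type*} (G : SimpleGraph V) (X1 X2 : Set V) : Prop :=
  ∃ A1 B1 A2 B2, IsTwoJoinSplit G X1 X2 A1 B1 A2 B2

/-- `(a1, a2, b1, b2)` is a proper 4-tuple of `G`. -/
def ProperQuad {V : Type*} (G : SimpleGraph V) (a1 a2 b1 b2 : V) : Prop :=
  a1 ≠ a2 ∧ a1 ≠ b1 ∧ a1 ≠ b2 ∧ a2 ≠ b1 ∧ a2 ≠ b2 ∧ b1 ≠ b2 ∧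
  G.Adj a1 a2 ∧ G.Adj b1 b2 ∧ ¬ G.Adj a1 b2 ∧ ¬ G.Adj b1 a2

/-- `G[X]` is a chordless path with one end in `A`, the other end in `B`,
and interior in `X \ (A ∪ B)`. -/
def IsPathSide {V : Type*} (G : SimpleGraph V) (X A B : Set V) : Prop :=
  ∃ (k : ℕ) (f : Fin (k+1) → V), Function.Injective f ∧
    X = Set.range f ∧ f 0 ∈ A ∧ f (Fin.last k) ∈ B ∧
    (∀ i : Fin (k+1), i ≠ 0 → i ≠ Fin.last k → f i ∉ A ∪ B) ∧
    (∀ i j : Fin (k+1), G.Adj (f i) (f j) ↔ ((i : ℕ) + 1 = (j : ℕ) ∨ (j : ℕ) + 1 = (i : ℕ)))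

/-- `(X1, X2)` is a path 2-join of `G`: it has a split one of whose sides is a path-side. -/
def IsPathTwoJoin {V : Type*} (G : SimpleGraph V) (X1 X2 : Set V) : Prop :=
  ∃ A1 B1 A2 B2, IsTwoJoinSplit G X1 X2 A1 B1 A2 B2 ∧
    (IsPathSide G X1 A1 B1 ∨ IsPathSide G X2 A2 B2)

/-- A non-path 2-join is a 2-join that is not a path 2-join. -/
def IsNonPathTwoJoin {V : Type*} (G : SimpleGraph V) (X1 X2 : Set V) : Prop :=
  IsTwoJoin G X1 X2 ∧ ¬ IsPathTwoJoin G X1 X2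

/-- `P` is an induced path of `G` contained in `X`, with one end in `A`, the other end
in `B`, interior in `X \ (A ∪ B)`, and all interior vertices of degree 2 in `G`. -/
def IsDegTwoABPath {V : Type*} [Fintype V] (G : SimpleGraph V) [DecidableRel G.Adj]
    (X A B P : Set V) : Prop :=
  ∃ (k : ℕ) (f : Fin (k+1) → V), Function.Injective f ∧
    P = Set.range f ∧ P ⊆ X ∧ f 0 ∈ A ∧ f (Fin.last k) ∈ B ∧
    (∀ i : Fin (k+1), i ≠ 0 → i ≠ Fin.last k →
      f i ∈ X \ (A ∪ B) ∧ G.degree (f i) = 2) ∧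
    (∀ i j : Fin (k+1), G.Adj (f i) (f j) ↔ ((i : ℕ) + 1 = (j : ℕ) ∨ (j : ℕ) + 1 = (i : ℕ)))


lemma deg_two_adj {V : Type*} [Fintype V] (G : SimpleGraph V) [DecidableRel G.Adj]
    {w x y z : V} (hdeg : G.degree w = 2) (hx : G.Adj w x) (hy : G.Adj w y)
    (hxy : x ≠ y) (hz : G.Adj w z) : z = x ∨ z = y := by
  classical
  have hsub : ({x, y} : Finset V) ⊆ G.neighborFinset w := by
    intro a ha
    rw [SimpleGraph.mem_neighborFinset]
    rcases Finset.mem_insert.1 ha with rfl | h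
    · exact hx
    · rw [Finset.mem_singleton.1 h]; exact hy
  have hc : (G.neighborFinset w).card ≤ ({x, y} : Finset V).card := by
    rw [Finset.card_pair hxy, SimpleGraph.card_neighborFinset_eq_degree, hdeg]
  have heq := Finset.eq_of_subset_of_card_le hsub hc
  have hmem : z ∈ ({x, y} : Finset V) := by
    rw [heq, SimpleGraph.mem_neighborFinset]; exact hz
  simpa using hmem

lemma chain_sub {V : Type*} [Fintype V] (G : SimpleGraph V) [DecidableRel G.Adj]
    (X A B : Set V)
    (k : ℕ) (f : Fin (k+1) → V) (hfinj : Function.Injective f)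
    (hf0 : f 0 ∈ A) (hfl : f (Fin.last k) ∈ B)
    (hfint : ∀ i : Fin (k+1), i ≠ 0 → i ≠ Fin.last k →
      f i ∈ X \ (A ∪ B) ∧ G.degree (f i) = 2)
    (hfadj : ∀ i j : Fin (k+1), G.Adj (f i) (f j) ↔
      ((i : ℕ) + 1 = (j : ℕ) ∨ (j : ℕ) + 1 = (i : ℕ)))
    (l : ℕ) (g : Fin (l+1) → V)
    (hg0 : g 0 ∈ A) (hgl : g (Fin.last l) ∈ B)
    (hgint : ∀ j : Fin (l+1), j ≠ 0 → j ≠ Fin.last l →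
      g j ∈ X \ (A ∪ B) ∧ G.degree (g j) = 2)
    (hgadj : ∀ i j : Fin (l+1), G.Adj (g i) (g j) ↔
      ((i : ℕ) + 1 = (j : ℕ) ∨ (j : ℕ) + 1 = (i : ℕ)))
    (i0 : Fin (k+1)) (h00 : (i0 : ℕ) ≠ 0) (h0k : (i0 : ℕ) ≠ k)
    (j0 : Fin (l+1)) (heq : f i0 = g j0) :
    Set.range g ⊆ Set.range f := by
  -- interior vertices of f are not in A ∪ B
  have hfi0 : i0 ≠ 0 := fun h => h00 (by rw [h]; simp)
  have hfi0' : i0 ≠ Fin.last k := fun h => h0k (by rw [h]; simp)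
  have hj0AB : g j0 ∉ A ∪ B := by
    rw [← heq]; exact (hfint i0 hfi0 hfi0').1.2
  have hj00 : (j0 : ℕ) ≠ 0 := by
    intro h
    have : j0 = 0 := Fin.ext (by simpa using h)
    exact hj0AB (Or.inl (this ▸ hg0))
  have hj0l : (j0 : ℕ) ≠ l := by
    intro h
    have : j0 = Fin.last l := Fin.ext (by simpa using h)
    exact hj0AB (Or.inr (this ▸ hgl))
  -- any neighbor of an interior vertex of f lies in range f
  have step : ∀ (u : V) (i : Fin (k+1)), (i : ℕ) ≠ 0 → (i : ℕ) ≠ k →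
      G.Adj (f i) u → u ∈ Set.range f := by
    intro u i hi hik hadj
    have hi1 : (i : ℕ) - 1 < k + 1 := by omega
    have hi2 : (i : ℕ) + 1 < k + 1 := by
      have := i.isLt; omega
    have hdeg : G.degree (f i) = 2 :=
      (hfint i (fun h => hi (by rw [h]; simp)) (fun h => hik (by rw [h]; simp))).2
    have hx : G.Adj (f i) (f ⟨(i : ℕ) - 1, hi1⟩) :=
      (hfadj i ⟨(i : ℕ) - 1, hi1⟩).2 (Or.inr (show (i : ℕ) - 1 + 1 = (i : ℕ) by omega))
    have hy : G.Adj (f i) (f ⟨(i : ℕ) + 1, hi2⟩) :=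
      (hfadj i ⟨(i : ℕ) + 1, hi2⟩).2 (Or.inl (show (i : ℕ) + 1 = (i : ℕ) + 1 from rfl))
    have hxy : f ⟨(i : ℕ) - 1, hi1⟩ ≠ f ⟨(i : ℕ) + 1, hi2⟩ := by
      intro h
      have := congrArg Fin.val (hfinj h)
      simp only [] at this
      omega
    rcases deg_two_adj G hdeg hx hy hxy hadj with h | h
    · exact h ▸ ⟨_, rfl⟩
    · exact h ▸ ⟨_, rfl⟩
  -- g interior vertices are determined
  have key : ∀ t : ℕ, ∀ j : Fin (l+1),
      ((j : ℕ) = (j0 : ℕ) + t ∨ (j : ℕ) + t = (j0 : ℕ)) → g j ∈ Set.range f := by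
    intro t
    induction t with
    | zero =>
      intro j hj
      have : j = j0 := Fin.ext (by omega)
      exact this ▸ ⟨i0, heq⟩
    | succ t ih =>
      intro j hj
      have hjl := j.isLt
      have hj0lt := j0.isLt
      rcases hj with hj | hj
      · -- j = j0 + t + 1
        set j' : Fin (l+1) := ⟨(j0 : ℕ) + t, by omega⟩ with hj'def
        obtain ⟨i, hi⟩ := ih j' (Or.inl rfl)
        have hadj : G.Adj (g j') (g j) :=
          (hgadj j' j).2 (Or.inl (show (j0 : ℕ) + t + 1 = (j : ℕ) by omega))
        by_cases hik : (i : ℕ) ≠ 0 ∧ (i : ℕ) ≠ k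
        · exact step (g j) i hik.1 hik.2 (hi ▸ hadj)
        · exfalso
          have hmem : g j' ∈ A ∪ B := by
            rw [← hi]
            rcases not_and_or.1 hik with h | h
            · push_neg at h
              have : i = 0 := Fin.ext (by simpa using h)
              exact Or.inl (this ▸ hf0)
            · push_neg at h
              have : i = Fin.last k := Fin.ext (by simpa using h)
              exact Or.inr (this ▸ hfl)
          have hj'0 : j' ≠ 0 := by
            intro h
            have := congrArg Fin.val h
            simp only [hj'def, Fin.val_zero] at this
            omega
          have hj'l : j' ≠ Fin.last l := by
            intro h
            have := congrArg Fin.val h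
            simp only [hj'def, Fin.val_last] at this
            omega
          exact (hgint j' hj'0 hj'l).1.2 hmem
      · -- j + t + 1 = j0
        set j' : Fin (l+1) := ⟨(j : ℕ) + 1, by omega⟩ with hj'def
        obtain ⟨i, hi⟩ := ih j' (Or.inr (show (j : ℕ) + 1 + t = (j0 : ℕ) by omega))
        have hadj : G.Adj (g j') (g j) :=
          (hgadj j' j).2 (Or.inr (show (j : ℕ) + 1 = (j : ℕ) + 1 from rfl))
        by_cases hik : (i : ℕ) ≠ 0 ∧ (i : ℕ) ≠ k
        · exact step (g j) i hik.1 hik.2 (hi ▸ hadj)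
        · exfalso
          have hmem : g j' ∈ A ∪ B := by
            rw [← hi]
            rcases not_and_or.1 hik with h | h
            · push_neg at h
              have : i = 0 := Fin.ext (by simpa using h)
              exact Or.inl (this ▸ hf0)
            · push_neg at h
              have : i = Fin.last k := Fin.ext (by simpa using h)
              exact Or.inr (this ▸ hfl)
          have hj'0 : j' ≠ 0 := by
            intro h
            have := congrArg Fin.val h
            simp only [hj'def, Fin.val_zero] at this
            omega
          have hj'l : j' ≠ Fin.last l := by
            intro h
            have := congrArg Fin.val h
            simp only [hj'def, Fin.val_last] at this
            omega
          exact (hgint j' hj'0 hj'l).1.2 hmem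
  rintro v ⟨j, rfl⟩
  rcases le_or_gt (j0 : ℕ) (j : ℕ) with h | h
  · exact key ((j : ℕ) - (j0 : ℕ)) j (Or.inl (by omega))
  · exact key ((j0 : ℕ) - (j : ℕ)) j (Or.inr (by omega))

theorem stmt_12 {V : Type*} [Fintype V] (G : SimpleGraph V) [DecidableRel G.Adj]
    (X Y A B A' B' : Set V) (hsplit : IsTwoJoinSplit G X Y A B A' B')
    (hnot : ¬ IsPathSide G X A B) :
    ∃ u ∈ X, ∃ v ∈ X, u ≠ v ∧
      ∀ P : Set V, IsDegTwoABPath G X A B P → ¬ (u ∈ P ∧ v ∈ P) := by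
  obtain ⟨hXY, hdisj, hAX, hBX, hA'Y, hB'Y, hAB, hA'B', hAne, hBne, hA'ne, hB'ne,
    hadjA, hadjB, hcross, hX3, hY3⟩ := hsplit
  by_contra hcon
  push_neg at hcon
  have hXfin : X.Finite := Set.toFinite X
  by_cases hbig : ∃ (k : ℕ) (f : Fin (k+1) → V), 2 ≤ k ∧ Function.Injective f ∧
      Set.range f ⊆ X ∧ f 0 ∈ A ∧ f (Fin.last k) ∈ B ∧
      (∀ i : Fin (k+1), i ≠ 0 → i ≠ Fin.last k →
        f i ∈ X \ (A ∪ B) ∧ G.degree (f i) = 2) ∧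
      (∀ i j : Fin (k+1), G.Adj (f i) (f j) ↔
        ((i : ℕ) + 1 = (j : ℕ) ∨ (j : ℕ) + 1 = (i : ℕ)))
  · obtain ⟨k, f, hk2, hinj, hfX, hf0, hfl, hint, hadj⟩ := hbig
    apply hnot
    have hXf : X = Set.range f := by
      apply Set.Subset.antisymm _ hfX
      intro z hz
      by_contra hznot
      have h1lt : (1 : ℕ) < k + 1 := by omega
      set w := f ⟨1, h1lt⟩ with hw
      have hwX : w ∈ X := hfX ⟨_, rfl⟩
      have hzw : z ≠ w := fun h => hznot (h ▸ ⟨_, rfl⟩)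
      obtain ⟨P, hP, hzP, hwP⟩ := hcon z hz w hwX hzw
      unfold IsDegTwoABPath at hP
      obtain ⟨l, g, hginj, rfl, hgX, hg0, hgl, hgint, hgadj⟩ := hP
      obtain ⟨j0, hj0⟩ := hwP
      have hsub := chain_sub G X A B k f hinj hf0 hfl hint hadj l g hg0 hgl
        (fun j h1 h2 => hgint j h1 h2) hgadj ⟨1, h1lt⟩
        (by simp) (by simp; omega) j0 hj0.symm
      exact hznot (hsub hzP)
    exact ⟨k, f, hinj, hXf, hf0, hfl, fun i h1 h2 => (hint i h1 h2).1.2, hadj⟩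
  · -- every path is a single edge from A to B
    have hk1 : ∀ P, IsDegTwoABPath G X A B P → ∃ a b, a ∈ A ∧ b ∈ B ∧ P = {a, b} := by
      intro P hP
      unfold IsDegTwoABPath at hP
      obtain ⟨k, g, hginj, rfl, hgX, hg0, hgl, hgint, hgadj⟩ := hP
      have hk0 : k ≠ 0 := by
        intro h
        subst h
        exact Set.disjoint_left.1 hAB hg0 (by simpa using hgl)
      have hklt : k < 2 := by
        by_contra hge
        push_neg at hge
        exact hbig ⟨k, g, hge, hginj, hgX, hg0, hgl, hgint, hgadj⟩
      have hk : k = 1 := by omega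
      subst hk
      refine ⟨g 0, g (Fin.last 1), hg0, hgl, ?_⟩
      ext v
      simp only [Set.mem_range, Set.mem_insert_iff, Set.mem_singleton_iff]
      constructor
      · rintro ⟨i, rfl⟩
        rcases Fin.exists_fin_two.1 ⟨i, rfl⟩ with h | h
        · exact Or.inl (by rw [h])
        · exact Or.inr (by rw [h]; rfl)
      · rintro (rfl | rfl)
        · exact ⟨0, rfl⟩
        · exact ⟨Fin.last 1, rfl⟩
    have hXAB : ∀ z ∈ X, z ∈ A ∪ B := by
      intro z hz
      obtain ⟨w, hwX, hwz⟩ := Set.exists_ne_of_one_lt_ncard (show 1 < X.ncard by omega) z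
      obtain ⟨P, hP, hzP, hwP⟩ := hcon z hz w hwX (Ne.symm hwz)
      obtain ⟨a, b, ha, hb, rfl⟩ := hk1 P hP
      simp only [Set.mem_insert_iff, Set.mem_singleton_iff] at hzP
      rcases hzP with rfl | rfl
      · exact Or.inl ha
      · exact Or.inr hb
    have hAsub : ∀ a1 ∈ A, ∀ a2 ∈ A, a1 = a2 := by
      intro a1 h1 a2 h2
      by_contra hne
      obtain ⟨P, hP, h1P, h2P⟩ := hcon a1 (hAX h1) a2 (hAX h2) hne
      obtain ⟨a, b, ha, hb, rfl⟩ := hk1 P hP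
      simp only [Set.mem_insert_iff, Set.mem_singleton_iff] at h1P h2P
      have hb1 : a1 ≠ b := fun h => Set.disjoint_left.1 hAB h1 (h ▸ hb)
      have hb2 : a2 ≠ b := fun h => Set.disjoint_left.1 hAB h2 (h ▸ hb)
      rcases h1P with rfl | h1P
      · rcases h2P with rfl | h2P
        · exact hne rfl
        · exact hb2 h2P
      · exact hb1 h1P
    have hBsub : ∀ b1 ∈ B, ∀ b2 ∈ B, b1 = b2 := by
      intro b1 h1 b2 h2
      by_contra hne
      obtain ⟨P, hP, h1P, h2P⟩ := hcon b1 (hBX h1) b2 (hBX h2) hne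
      obtain ⟨a, b, ha, hb, rfl⟩ := hk1 P hP
      simp only [Set.mem_insert_iff, Set.mem_singleton_iff] at h1P h2P
      have ha1 : b1 ≠ a := fun h => Set.disjoint_right.1 hAB h1 (h ▸ ha)
      have ha2 : b2 ≠ a := fun h => Set.disjoint_right.1 hAB h2 (h ▸ ha)
      rcases h1P with h1P | rfl
      · exact ha1 h1P
      · rcases h2P with h2P | rfl
        · exact ha2 h2P
        · exact hne rfl
    obtain ⟨a, ha⟩ := hAne
    obtain ⟨b, hb⟩ := hBne
    have hsub : X ⊆ {a, b} := by
      intro z hz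
      rcases hXAB z hz with h | h
      · exact Or.inl (hAsub z h a ha)
      · exact Or.inr (hBsub z h b hb)
    have hab : a ≠ b := fun h => Set.disjoint_left.1 hAB ha (h ▸ hb)
    have hle : X.ncard ≤ ({a, b} : Set V).ncard :=
      Set.ncard_le_ncard hsub (Set.toFinite _)
    rw [Set.ncard_pair hab] at hle
    omega
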